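/- Let (M, g) be an n-dimensional Riemannian manifold of finite volume, i.e. the Riemannian volume measure ν_g satisfies Vol(M,g) := ν_g(M) < ∞. Let h, k be continuous symmetric 2-covariant tensor fields on M that are g-measurable, i.e. there exist λ, μ ∈ ℝ₊ with −λ g(x) ≤ h(x) ≤ λ g(x) and −μ g(x) ≤ k(x) ≤ μ g(x) for all x ∈ M (where ≤ is the pointwise positive-semidefinite order), and set |h|⁰_g := min{λ : −λg ≤ h ≤ λg} and |k|⁰_g := min{μ : −μg ≤ k ≤ μg}. Then the function x ↦ Σᵢ h_x((k_x(Eᵢ))^♯, Eᵢ) (where (Eᵢ) is any local g-orthonormal frame; this is the pointwise inner product trace(g⁻¹ h g⁻¹ k)) is ν_g-integrable, and the canonical metric pairing G_g(h,k) := ∫_M trace(g⁻¹ h g⁻¹ k) dν_g satisfies −n |h|⁰_g |k|⁰_g Vol(M,g) ≤ G_g(h,k) ≤ n |h|⁰_g |k|⁰_g Vol(M,g). In particular the canonical Riemannian metric G on the space of Riemannian metrics is defined on the space Γ_g of g-measurable tensor fields when g has finite volume. -/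

import Mathlib

open Bundle Set Manifold MeasureTheory

/-- `|h|⁰_g`: the infimum (in fact minimum) of the set of `λ ≥ 0` with
`-λ g ≤ h ≤ λ g` in the pointwise positive-semidefinite order, for 2-covariant
symmetric tensor fields `g, h` on the `n`-manifold `M`. -/
noncomputable def gMeasNorm {n : ℕ} {M : Type*} [TopologicalSpace M]
    [ChartedSpace (EuclideanSpace ℝ (Fin n)) M] [IsManifold (𝓡 n) (⊤ : ℕ∞) M]
    (g h : ∀ x : M, TangentSpace (𝓡 n) x →ₗ[ℝ] TangentSpace (𝓡 n) x →ₗ[ℝ] ℝ) : ℝ :=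
  sInf {lam : ℝ | 0 ≤ lam ∧ ∀ (x : M) (v : TangentSpace (𝓡 n) x),
    -(lam * g x v v) ≤ h x v v ∧ h x v v ≤ lam * g x v v}


section Aux

open Matrix LinearMap

variable {V : Type*} [AddCommGroup V] [Module ℝ V] {n : ℕ}

/-- bilinear expansion in a basis -/
lemma bilin_expand (b : Module.Basis (Fin n) ℝ V) (g : V →ₗ[ℝ] V →ₗ[ℝ] ℝ) (u v : V) :
    g u v = ∑ i, ∑ j, b.repr u i * b.repr v j * g (b i) (b j) := by
  conv_lhs => rw [← b.sum_repr u, ← b.sum_repr v]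
  rw [map_sum, Finset.sum_comm]
  refine Finset.sum_congr rfl fun j _ => ?_
  rw [LinearMap.map_smul, ← b.sum_repr u, map_sum, LinearMap.sum_apply, smul_eq_mul,
    Finset.mul_sum]
  refine Finset.sum_congr rfl fun i _ => ?_
  rw [LinearMap.map_smul, LinearMap.smul_apply, smul_eq_mul]
  ring

/-- Gram matrix is positive definite -/
lemma gram_posDef (b : Module.Basis (Fin n) ℝ V) (g : V →ₗ[ℝ] V →ₗ[ℝ] ℝ)
    (hg_symm : ∀ u v, g u v = g v u) (hg_pos : ∀ v, v ≠ 0 → 0 < g v v) :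
    (Matrix.of fun i j => g (b i) (b j)).PosDef := by
  rw [Matrix.posDef_iff_dotProduct_mulVec]
  constructor
  · ext i j
    simp [Matrix.conjTranspose_apply, hg_symm (b i) (b j)]
  · intro x hx
    have hx' : (∑ j, x j • b j) ≠ 0 := by
      intro hc
      apply hx
      funext j
      have h1 : b.repr (∑ j, x j • b j) j = 0 := by rw [hc]; simp
      rwa [b.repr_sum_self] at h1
    have hpos := hg_pos _ hx'
    have : (star x ⬝ᵥ (Matrix.of fun i j => g (b i) (b j)) *ᵥ x) = g (∑ j, x j • b j) (∑ j, x j • b j) := by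
      rw [bilin_expand b g]
      simp only [b.repr_sum_self]
      simp only [dotProduct, Matrix.mulVec, Matrix.of_apply, star_trivial]
      refine Finset.sum_congr rfl fun i _ => ?_
      rw [Finset.mul_sum]
      refine Finset.sum_congr rfl fun j _ => ?_
      ring
    rw [this]
    exact hpos

/-- trace formula in a basis -/
lemma trace_formula (b : Module.Basis (Fin n) ℝ V) (g h k : V →ₗ[ℝ] V →ₗ[ℝ] ℝ)
    (hg_symm : ∀ u v, g u v = g v u) (hg_pos : ∀ v, v ≠ 0 → 0 < g v v)
    (hh_symm : ∀ u v, h u v = h v u) (hk_symm : ∀ u v, k u v = k v u)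
    (H K : V →ₗ[ℝ] V)
    (hH : ∀ u v, g (H u) v = h u v) (hK : ∀ u v, g (K u) v = k u v) :
    LinearMap.trace ℝ V (H ∘ₗ K) =
      Matrix.trace ((Matrix.of fun i j => g (b i) (b j))⁻¹ * (Matrix.of fun i j => h (b i) (b j)) *
        ((Matrix.of fun i j => g (b i) (b j))⁻¹ * (Matrix.of fun i j => k (b i) (b j)))) := by
  classical
  set G := (Matrix.of fun i j => g (b i) (b j)) with hG
  have hGpd : G.PosDef := gram_posDef b g hg_symm hg_pos
  have hdet : IsUnit G.det := hGpd.det_pos.ne'.isUnit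
  set A := LinearMap.toMatrix b b H with hA
  set Ak := LinearMap.toMatrix b b K with hAk
  have key : ∀ (T : V →ₗ[ℝ] V) (t : V →ₗ[ℝ] V →ₗ[ℝ] ℝ), (∀ u v, g (T u) v = t u v) →
      (∀ u v, t u v = t v u) →
      G * (LinearMap.toMatrix b b T) = (Matrix.of fun i j => t (b i) (b j)) := by
    intro T t hT ht_symm
    ext i j
    rw [Matrix.mul_apply]
    have : t (b i) (b j) = g (b i) (T (b j)) := by
      rw [ht_symm, ← hT, hg_symm]
    rw [Matrix.of_apply, this]
    conv_rhs => rw [← b.sum_repr (T (b j))]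
    rw [map_sum]
    refine Finset.sum_congr rfl fun l _ => ?_
    rw [LinearMap.map_smul, smul_eq_mul, hG]
    simp only [Matrix.of_apply, LinearMap.toMatrix_apply]
    ring
  have hAEq : A = G⁻¹ * (Matrix.of fun i j => h (b i) (b j)) := by
    rw [← key H h hH hh_symm, ← Matrix.mul_assoc, Matrix.nonsing_inv_mul G hdet, Matrix.one_mul]
  have hAkEq : Ak = G⁻¹ * (Matrix.of fun i j => k (b i) (b j)) := by
    rw [← key K k hK hk_symm, ← Matrix.mul_assoc, Matrix.nonsing_inv_mul G hdet, Matrix.one_mul]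
  rw [LinearMap.trace_eq_matrix_trace ℝ b, LinearMap.toMatrix_comp b b b, ← hA, ← hAk,
    hAEq, hAkEq]


lemma traceBound {E : Type*} [NormedAddCommGroup E] [InnerProductSpace ℝ E]
    [FiniteDimensional ℝ E] {n : ℕ} (hn : Module.finrank ℝ E = n)
    {A B : E →ₗ[ℝ] E} (hA : A.IsSymmetric) (hB : B.IsSymmetric)
    {lam mu : ℝ}
    (hAb : ∀ v : E, |(inner ℝ (A v) v : ℝ)| ≤ lam * ‖v‖ ^ 2)
    (hBb : ∀ v : E, |(inner ℝ (B v) v : ℝ)| ≤ mu * ‖v‖ ^ 2) :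
    |LinearMap.trace ℝ E (A ∘ₗ B)| ≤ n * lam * mu := by
  classical
  set b := hA.eigenvectorBasis hn with hbdef
  have htr : LinearMap.trace ℝ E (A ∘ₗ B)
      = ∑ i, (inner ℝ (b i) ((A ∘ₗ B) (b i)) : ℝ) := by
    rw [LinearMap.trace_eq_matrix_trace ℝ b.toBasis, Matrix.trace]
    simp only [Matrix.diag]
    congr 1
    ext i
    rw [LinearMap.toMatrix_apply]
    simp [OrthonormalBasis.coe_toBasis_repr_apply, OrthonormalBasis.repr_apply_apply,
      OrthonormalBasis.coe_toBasis]
  rw [htr]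
  have hnorm1 : ∀ i, ‖b i‖ = 1 := fun i => b.orthonormal.1 i
  calc |∑ i, (inner ℝ (b i) ((A ∘ₗ B) (b i)) : ℝ)|
      ≤ ∑ i, |(inner ℝ (b i) ((A ∘ₗ B) (b i)) : ℝ)| := Finset.abs_sum_le_sum_abs _ _
    _ ≤ ∑ _i : Fin n, lam * mu := by
        apply Finset.sum_le_sum
        intro i _
        have hcomp : (inner ℝ (b i) ((A ∘ₗ B) (b i)) : ℝ)
            = hA.eigenvalues hn i * inner ℝ (B (b i)) (b i) := by
          have : (inner ℝ (b i) (A (B (b i))) : ℝ) = inner ℝ (A (b i)) (B (b i)) := by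
            rw [← hA (b i) (B (b i))]
          simp only [LinearMap.comp_apply, this, (show A (b i) = hA.eigenvalues hn i • b i from hA.apply_eigenvectorBasis hn i)]
          rw [real_inner_smul_left, real_inner_comm]
        rw [hcomp, abs_mul]
        have hev : |hA.eigenvalues hn i| ≤ lam := by
          have := hAb (b i)
          rw [(show A (b i) = hA.eigenvalues hn i • b i from hA.apply_eigenvectorBasis hn i)] at this
          simpa [real_inner_smul_left, real_inner_self_eq_norm_sq, hnorm1 i] using this
        have hBv : |(inner ℝ (B (b i)) (b i) : ℝ)| ≤ mu := by
          have := hBb (b i)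
          simpa [hnorm1 i] using this
        have h0 : (0:ℝ) ≤ |(inner ℝ (B (b i)) (b i) : ℝ)| := abs_nonneg _
        calc |hA.eigenvalues hn i| * |(inner ℝ (B (b i)) (b i) : ℝ)|
            ≤ lam * |(inner ℝ (B (b i)) (b i) : ℝ)| :=
              mul_le_mul_of_nonneg_right hev h0
          _ ≤ lam * mu := mul_le_mul_of_nonneg_left hBv (le_trans (abs_nonneg _) hev)
        
    _ = n * lam * mu := by simp [mul_assoc]

open scoped MatrixOrder in
lemma trace_bound_general [FiniteDimensional ℝ V] (hn : Module.finrank ℝ V = n)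
    (g h k : V →ₗ[ℝ] V →ₗ[ℝ] ℝ)
    (hg_symm : ∀ u v, g u v = g v u) (hg_pos : ∀ v, v ≠ 0 → 0 < g v v)
    (hh_symm : ∀ u v, h u v = h v u) (hk_symm : ∀ u v, k u v = k v u)
    {lam mu : ℝ}
    (hhb : ∀ v, -(lam * g v v) ≤ h v v ∧ h v v ≤ lam * g v v)
    (hkb : ∀ v, -(mu * g v v) ≤ k v v ∧ k v v ≤ mu * g v v)
    (H K : V →ₗ[ℝ] V)
    (hH : ∀ u v, g (H u) v = h u v) (hK : ∀ u v, g (K u) v = k u v) :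
    |LinearMap.trace ℝ V (H ∘ₗ K)| ≤ n * lam * mu := by
  classical
  let E := EuclideanSpace ℝ (Fin n)
  have hnE : Module.finrank ℝ (EuclideanSpace ℝ (Fin n)) = n := finrank_euclideanSpace_fin
  have Ψ : V ≃ₗ[ℝ] EuclideanSpace ℝ (Fin n) := LinearEquiv.ofFinrankEq V _ (by rw [hn, hnE])
  -- pull back the tensors to E
  set g' : EuclideanSpace ℝ (Fin n) →ₗ[ℝ] EuclideanSpace ℝ (Fin n) →ₗ[ℝ] ℝ := g.compl₁₂ Ψ.symm.toLinearMap Ψ.symm.toLinearMap with hg'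
  set h' : EuclideanSpace ℝ (Fin n) →ₗ[ℝ] EuclideanSpace ℝ (Fin n) →ₗ[ℝ] ℝ := h.compl₁₂ Ψ.symm.toLinearMap Ψ.symm.toLinearMap with hh'
  set k' : EuclideanSpace ℝ (Fin n) →ₗ[ℝ] EuclideanSpace ℝ (Fin n) →ₗ[ℝ] ℝ := k.compl₁₂ Ψ.symm.toLinearMap Ψ.symm.toLinearMap with hk'
  set H' : EuclideanSpace ℝ (Fin n) →ₗ[ℝ] EuclideanSpace ℝ (Fin n) := Ψ.conj H with hH'
  set K' : EuclideanSpace ℝ (Fin n) →ₗ[ℝ] EuclideanSpace ℝ (Fin n) := Ψ.conj K with hK'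
  have hg'app : ∀ u v : EuclideanSpace ℝ (Fin n), g' u v = g (Ψ.symm u) (Ψ.symm v) := fun u v => rfl
  have hh'app : ∀ u v : EuclideanSpace ℝ (Fin n), h' u v = h (Ψ.symm u) (Ψ.symm v) := fun u v => rfl
  have hk'app : ∀ u v : EuclideanSpace ℝ (Fin n), k' u v = k (Ψ.symm u) (Ψ.symm v) := fun u v => rfl
  have hH'app : ∀ u v : EuclideanSpace ℝ (Fin n), g' (H' u) v = h' u v := by
    intro u v
    rw [hg'app, hh'app, hH', LinearEquiv.conj_apply]
    simp only [LinearMap.comp_apply, LinearEquiv.coe_coe, LinearEquiv.symm_apply_apply]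
    exact hH _ _
  have hK'app : ∀ u v : EuclideanSpace ℝ (Fin n), g' (K' u) v = k' u v := by
    intro u v
    rw [hg'app, hk'app, hK', LinearEquiv.conj_apply]
    simp only [LinearMap.comp_apply, LinearEquiv.coe_coe, LinearEquiv.symm_apply_apply]
    exact hK _ _
  have htr : LinearMap.trace ℝ (EuclideanSpace ℝ (Fin n)) (H' ∘ₗ K') = LinearMap.trace ℝ V (H ∘ₗ K) := by
    rw [hH', hK', ← LinearEquiv.conj_comp, LinearMap.trace_conj']
  have hg'_symm : ∀ u v : EuclideanSpace ℝ (Fin n), g' u v = g' v u := fun u v => hg_symm _ _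
  have hh'_symm : ∀ u v : EuclideanSpace ℝ (Fin n), h' u v = h' v u := fun u v => hh_symm _ _
  have hg'_pos : ∀ v : EuclideanSpace ℝ (Fin n), v ≠ 0 → 0 < g' v v := by
    intro v hv
    exact hg_pos _ (fun hc => hv (by simpa using congrArg Ψ hc))
  -- Gram matrix square root on E
  set b := PiLp.basisFun 2 ℝ (Fin n) with hb
  set G := Matrix.of (fun i j => g' (b i) (b j)) with hGdef
  have hGpd : G.PosDef := gram_posDef b g' hg'_symm hg'_pos
  set S := CFC.sqrt G with hSdef
  have hS2 : S * S = G := CFC.sqrt_mul_sqrt_self G hGpd.posSemidef.nonneg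
  have hSH : S.IsHermitian := (CFC.sqrt_nonneg G).posSemidef.1
  have hST : Sᵀ = S := by
    ext i j
    conv_rhs => rw [← hSH.eq]
    simp [Matrix.conjTranspose_apply]
  have hSdet : IsUnit S.det := by
    have : S.det * S.det = G.det := by rw [← Matrix.det_mul, hS2]
    have hGdetpos := hGpd.det_pos
    refine isUnit_iff_ne_zero.2 fun hc => ?_
    rw [hc, mul_zero] at this
    exact hGdetpos.ne (this ▸ rfl)
  have hmulΦ : ∀ (P Q : Matrix (Fin n) (Fin n) ℝ),
      Matrix.toEuclideanLin P ∘ₗ Matrix.toEuclideanLin Q = Matrix.toEuclideanLin (P * Q) := by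
    intro P Q
    apply LinearMap.ext
    intro v
    simp [Matrix.toEuclideanLin_apply, Matrix.mulVec_mulVec]
  set Φ : EuclideanSpace ℝ (Fin n) ≃ₗ[ℝ] EuclideanSpace ℝ (Fin n) := LinearEquiv.ofLinear (Matrix.toEuclideanLin S)
    (Matrix.toEuclideanLin S⁻¹)
    (by rw [hmulΦ, Matrix.mul_nonsing_inv S hSdet]
        apply LinearMap.ext; intro v
        simp [Matrix.toEuclideanLin_apply])
    (by rw [hmulΦ, Matrix.nonsing_inv_mul S hSdet]
        apply LinearMap.ext; intro v
        simp [Matrix.toEuclideanLin_apply])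
  have hΦ_apply : ∀ u : EuclideanSpace ℝ (Fin n), Φ u = Matrix.toEuclideanLin S u := fun u => rfl
  have hkey : ∀ u v : EuclideanSpace ℝ (Fin n), (inner ℝ (Φ u) (Φ v) : ℝ) = g' u v := by
    intro u v
    rw [bilin_expand b g' u v, hΦ_apply, hΦ_apply, Matrix.toEuclideanLin_apply,
      Matrix.toEuclideanLin_apply, PiLp.inner_apply]
    simp only [RCLike.inner_apply, starRingEnd_apply, star_trivial,
      PiLp.basisFun_repr]
    have hvm : ∀ x : Fin n → ℝ, x ᵥ* S = S *ᵥ x := by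
      intro x
      conv_lhs => rw [← hST]
      exact Matrix.vecMul_transpose S x
    have : ∑ i, (S *ᵥ v.ofLp) i * (S *ᵥ u.ofLp) i
        = (S *ᵥ u.ofLp) ⬝ᵥ (S *ᵥ v.ofLp) := by
      simp only [dotProduct]; exact Finset.sum_congr rfl fun i _ => mul_comm _ _
    rw [this, ← hvm, ← dotProduct_mulVec, Matrix.mulVec_mulVec, hS2]
    simp only [dotProduct, Matrix.mulVec, Matrix.of_apply]
    refine Finset.sum_congr rfl fun i _ => ?_
    rw [Finset.mul_sum]
    refine Finset.sum_congr rfl fun j _ => ?_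
    have hu : u.ofLp i = b.repr u i := (PiLp.basisFun_repr 2 ℝ (Fin n) u i).symm
    have hv : v.ofLp j = b.repr v j := (PiLp.basisFun_repr 2 ℝ (Fin n) v j).symm
    rw [hu, hv]; simp only [hGdef, Matrix.of_apply]; ring
  set A : EuclideanSpace ℝ (Fin n) →ₗ[ℝ] EuclideanSpace ℝ (Fin n) := Φ.conj H' with hAdef
  set B : EuclideanSpace ℝ (Fin n) →ₗ[ℝ] EuclideanSpace ℝ (Fin n) := Φ.conj K' with hBdef
  have hAapp : ∀ a b : EuclideanSpace ℝ (Fin n),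
      (inner ℝ (A a) b : ℝ) = h' (Φ.symm a) (Φ.symm b) := by
    intro a c
    rw [hAdef, LinearEquiv.conj_apply]
    simp only [LinearMap.comp_apply, LinearEquiv.coe_coe]
    conv_lhs => rw [← Φ.apply_symm_apply c]
    rw [hkey, hH'app]
  have hBapp : ∀ a b : EuclideanSpace ℝ (Fin n),
      (inner ℝ (B a) b : ℝ) = k' (Φ.symm a) (Φ.symm b) := by
    intro a c
    rw [hBdef, LinearEquiv.conj_apply]
    simp only [LinearMap.comp_apply, LinearEquiv.coe_coe]
    conv_lhs => rw [← Φ.apply_symm_apply c]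
    rw [hkey, hK'app]
  have hh'_symm2 : ∀ u v : EuclideanSpace ℝ (Fin n), h' u v = h' v u := fun u v => hh_symm _ _
  have hk'_symm2 : ∀ u v : EuclideanSpace ℝ (Fin n), k' u v = k' v u := fun u v => hk_symm _ _
  have hAsymm : A.IsSymmetric := by
    intro a c
    rw [hAapp, real_inner_comm, hAapp, hh'_symm2]
  have hBsymm : B.IsSymmetric := by
    intro a c
    rw [hBapp, real_inner_comm, hBapp, hk'_symm2]
  have hnormsq : ∀ a : EuclideanSpace ℝ (Fin n), g' (Φ.symm a) (Φ.symm a) = ‖a‖ ^ 2 := by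
    intro a
    rw [← hkey, Φ.apply_symm_apply, real_inner_self_eq_norm_sq]
  have hAbound : ∀ a : EuclideanSpace ℝ (Fin n), |(inner ℝ (A a) a : ℝ)| ≤ lam * ‖a‖ ^ 2 := by
    intro a
    rw [hAapp]
    have h1 := hhb (Ψ.symm (Φ.symm a))
    have h2 : |h' (Φ.symm a) (Φ.symm a)| ≤ lam * g' (Φ.symm a) (Φ.symm a) := by
      rw [abs_le]
      constructor
      · rw [neg_le]
        have := h1.1
        rw [← hh'app, ← hg'app] at this
        linarith
      · have := h1.2
        rw [← hh'app, ← hg'app] at this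
        linarith
    rw [hnormsq] at h2
    exact h2
  have hBbound : ∀ a : EuclideanSpace ℝ (Fin n), |(inner ℝ (B a) a : ℝ)| ≤ mu * ‖a‖ ^ 2 := by
    intro a
    rw [hBapp]
    have h1 := hkb (Ψ.symm (Φ.symm a))
    have h2 : |k' (Φ.symm a) (Φ.symm a)| ≤ mu * g' (Φ.symm a) (Φ.symm a) := by
      rw [abs_le]
      constructor
      · rw [neg_le]
        have := h1.1
        rw [← hk'app, ← hg'app] at this
        linarith
      · have := h1.2
        rw [← hk'app, ← hg'app] at this
        linarith
    rw [hnormsq] at h2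
    exact h2
  have hfinal := traceBound hnE hAsymm hBsymm hAbound hBbound
  have htrAB : LinearMap.trace ℝ (EuclideanSpace ℝ (Fin n)) (A ∘ₗ B)
      = LinearMap.trace ℝ V (H ∘ₗ K) := by
    rw [hAdef, hBdef, ← LinearEquiv.conj_comp, LinearMap.trace_conj', htr]
  rw [htrAB] at hfinal
  exact hfinal


lemma cont_trace {n : ℕ} {M : Type*} [TopologicalSpace M]
    [ChartedSpace (EuclideanSpace ℝ (Fin n)) M] [IsManifold (𝓡 n) (⊤ : ℕ∞) M]
    (g h k : ∀ x : M, TangentSpace (𝓡 n) x →ₗ[ℝ] TangentSpace (𝓡 n) x →ₗ[ℝ] ℝ)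
    (hg_symm : ∀ (x : M) (u v : TangentSpace (𝓡 n) x), g x u v = g x v u)
    (hg_pos : ∀ (x : M) (v : TangentSpace (𝓡 n) x), v ≠ 0 → 0 < g x v v)
    (hg_cont : Continuous fun p : TotalSpace (EuclideanSpace ℝ (Fin n))
      (TangentSpace (𝓡 n) : M → Type _) => g p.proj p.2 p.2)
    (hh_symm : ∀ (x : M) (u v : TangentSpace (𝓡 n) x), h x u v = h x v u)
    (hk_symm : ∀ (x : M) (u v : TangentSpace (𝓡 n) x), k x u v = k x v u)
    (hh_cont : Continuous fun p : TotalSpace (EuclideanSpace ℝ (Fin n))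
      (TangentSpace (𝓡 n) : M → Type _) => h p.proj p.2 p.2)
    (hk_cont : Continuous fun p : TotalSpace (EuclideanSpace ℝ (Fin n))
      (TangentSpace (𝓡 n) : M → Type _) => k p.proj p.2 p.2)
    (H K : ∀ x : M, TangentSpace (𝓡 n) x →ₗ[ℝ] TangentSpace (𝓡 n) x)
    (hH : ∀ (x : M) (u v : TangentSpace (𝓡 n) x), g x (H x u) v = h x u v)
    (hK : ∀ (x : M) (u v : TangentSpace (𝓡 n) x), g x (K x u) v = k x u v) :
    Continuous fun x : M => LinearMap.trace ℝ (TangentSpace (𝓡 n) x) (H x ∘ₗ K x) := by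
  classical
  rw [continuous_iff_continuousAt]
  intro x₀
  set e := trivializationAt (EuclideanSpace ℝ (Fin n)) (TangentSpace (𝓡 n)) x₀ with he
  have hx₀ : x₀ ∈ e.baseSet := FiberBundle.mem_baseSet_trivializationAt _ _ x₀
  have hopen : IsOpen e.baseSet := e.open_baseSet
  have key : ∀ (t : ∀ x : M, TangentSpace (𝓡 n) x →ₗ[ℝ] TangentSpace (𝓡 n) x →ₗ[ℝ] ℝ),
      (Continuous fun p : TotalSpace (EuclideanSpace ℝ (Fin n))
        (TangentSpace (𝓡 n) : M → Type _) => t p.proj p.2 p.2) →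
      (∀ (x : M) (u v : TangentSpace (𝓡 n) x), t x u v = t x v u) →
      ∀ v w : EuclideanSpace ℝ (Fin n),
        ContinuousOn (fun y => t y (e.symm y v) (e.symm y w)) e.baseSet := by
    intro t ht htsymm v w
    have hsec : ∀ u : EuclideanSpace ℝ (Fin n),
        ContinuousOn (fun y => t y (e.symm y u) (e.symm y u)) e.baseSet := by
      intro u
      have h4 : ContinuousOn (fun y : M => (y, u)) e.baseSet :=
        (continuous_id.prodMk continuous_const).continuousOn
      have h2 : ContinuousOn
          (fun y : M => TotalSpace.mk' (EuclideanSpace ℝ (Fin n)) y (e.symm y u)) e.baseSet :=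
        e.continuousOn_symm.comp h4 (fun y hy => ⟨hy, mem_univ _⟩)
      exact ht.comp_continuousOn h2
    have hpol : ∀ y ∈ e.baseSet, t y (e.symm y v) (e.symm y w)
           = (t y (e.symm y (v + w)) (e.symm y (v + w))
           - t y (e.symm y v) (e.symm y v) - t y (e.symm y w) (e.symm y w)) / 2 := by
      intro y hy
      have hadd : e.symm y (v + w) = e.symm y v + e.symm y w := by
        rw [← Trivialization.symmL_apply (R := ℝ) e hy, map_add, Trivialization.symmL_apply (R := ℝ) e hy,
          Trivialization.symmL_apply (R := ℝ) e hy]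
      rw [hadd]
      simp only [map_add, LinearMap.add_apply]
      rw [htsymm y (e.symm y w) (e.symm y v)]
      ring
    exact ContinuousOn.congr ((((hsec (v+w)).sub (hsec v)).sub (hsec w)).div_const 2) hpol
  set sing : Fin n → EuclideanSpace ℝ (Fin n) := fun i => EuclideanSpace.single i 1 with hsing
  set Gm : M → Matrix (Fin n) (Fin n) ℝ :=
    fun y => Matrix.of fun i j => g y (e.symm y (sing i)) (e.symm y (sing j)) with hGm
  set hm : M → Matrix (Fin n) (Fin n) ℝ :=
    fun y => Matrix.of fun i j => h y (e.symm y (sing i)) (e.symm y (sing j)) with hhm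
  set km : M → Matrix (Fin n) (Fin n) ℝ :=
    fun y => Matrix.of fun i j => k y (e.symm y (sing i)) (e.symm y (sing j)) with hkm
  have hGmAt : ContinuousAt Gm x₀ := by
    apply continuousAt_pi.2; intro i; apply continuousAt_pi.2; intro j
    exact (key g hg_cont hg_symm (sing i) (sing j)).continuousAt (hopen.mem_nhds hx₀)
  have hhmAt : ContinuousAt hm x₀ := by
    apply continuousAt_pi.2; intro i; apply continuousAt_pi.2; intro j
    exact (key h hh_cont hh_symm (sing i) (sing j)).continuousAt (hopen.mem_nhds hx₀)
  have hkmAt : ContinuousAt km x₀ := by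
    apply continuousAt_pi.2; intro i; apply continuousAt_pi.2; intro j
    exact (key k hk_cont hk_symm (sing i) (sing j)).continuousAt (hopen.mem_nhds hx₀)
  -- the moving basis
  have hbase : ∀ (y : M) (hy : y ∈ e.baseSet), ∃ b : Module.Basis (Fin n) ℝ (TangentSpace (𝓡 n) y),
      ∀ i, b i = e.symm y (sing i) := by
    intro y hy
    refine ⟨(PiLp.basisFun 2 ℝ (Fin n)).map
      (e.continuousLinearEquivAt ℝ y hy).toLinearEquiv.symm, fun i => ?_⟩
    rw [Module.Basis.map_apply, PiLp.basisFun_apply]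
    show ((e.continuousLinearEquivAt ℝ y hy).symm : EuclideanSpace ℝ (Fin n) → TangentSpace (𝓡 n) y) _ = _
    rw [Trivialization.symm_continuousLinearEquivAt_eq, Trivialization.symmL_apply]
    exact hy
  have hfeq : ∀ y ∈ e.baseSet,
      LinearMap.trace ℝ (TangentSpace (𝓡 n) y) (H y ∘ₗ K y)
        = ((Gm y)⁻¹ * hm y * ((Gm y)⁻¹ * km y)).trace := by
    intro y hy
    obtain ⟨b, hb⟩ := hbase y hy
    have := trace_formula b (g y) (h y) (k y) (hg_symm y) (hg_pos y) (hh_symm y) (hk_symm y)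
      (H y) (K y) (hH y) (hK y)
    rw [this]
    have hGe : (Matrix.of fun i j => g y (b i) (b j)) = Gm y := by
      ext i j; rw [Matrix.of_apply, hb, hb]; rfl
    have hhe : (Matrix.of fun i j => h y (b i) (b j)) = hm y := by
      ext i j; rw [Matrix.of_apply, hb, hb]; rfl
    have hke : (Matrix.of fun i j => k y (b i) (b j)) = km y := by
      ext i j; rw [Matrix.of_apply, hb, hb]; rfl
    rw [hGe, hhe, hke]
  -- determinant is a unit at x₀
  have hdetunit : IsUnit (Gm x₀).det := by
    obtain ⟨b, hb⟩ := hbase x₀ hx₀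
    have hGpd := gram_posDef b (g x₀) (hg_symm x₀) (hg_pos x₀)
    have hGe : (Matrix.of fun i j => g x₀ (b i) (b j)) = Gm x₀ := by
      ext i j; rw [Matrix.of_apply, hb, hb]; rfl
    rw [← hGe]
    exact hGpd.det_pos.ne'.isUnit
  have hRinv : ContinuousAt Ring.inverse (Gm x₀).det := by
    rw [← hdetunit.unit_spec]
    exact NormedRing.inverse_continuousAt hdetunit.unit
  have hinvAt : ContinuousAt (fun y => (Gm y)⁻¹) x₀ :=
    (continuousAt_matrix_inv (Gm x₀) hRinv).comp hGmAt
  have hmainAt : ContinuousAt (fun y => ((Gm y)⁻¹ * hm y * ((Gm y)⁻¹ * km y)).trace) x₀ :=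
    (continuous_id.matrix_trace).continuousAt.comp ((hinvAt.mul hhmAt).mul (hinvAt.mul hkmAt))
  exact hmainAt.congr (Filter.eventuallyEq_of_mem (hopen.mem_nhds hx₀) (fun y hy => (hfeq y hy))).symm


lemma le_mul_csInf {c a : ℝ} {S : Set ℝ} (hS : S.Nonempty)
    (ha : 0 ≤ a) (hc : ∀ x ∈ S, c ≤ a * x) : c ≤ a * sInf S := by
  rcases eq_or_lt_of_le ha with h0 | hpos
  · obtain ⟨x, hx⟩ := hS
    have := hc x hx
    rw [← h0] at this ⊢
    simpa using this
  · have h1 : c / a ≤ sInf S := by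
      apply le_csInf hS
      intro x hx
      rw [div_le_iff₀' hpos]
      exact hc x hx
    have h2 := mul_le_mul_of_nonneg_left h1 hpos.le
    rwa [mul_div_cancel₀ _ hpos.ne'] at h2

end Aux

/-- Let `(M, g)` be an `n`-dimensional Riemannian manifold of finite
volume, with Riemannian volume measure `ν = ν_g` satisfying `Vol(M, g) = ν(M) < ∞`
(Mathlib has no canonical Riemannian volume measure, so `ν` is taken to be a finite
Borel measure playing the role of `ν_g`).  Let `h, k` be continuous symmetric
2-covariant tensor fields on `M` that are `g`-measurable (`∃ λ ≥ 0, -λg ≤ h ≤ λg`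
pointwise, and similarly for `k`), and let `H, K` be the fields of `g`-self-adjoint
endomorphisms of the tangent spaces representing `h, k`.  Then the pointwise inner
product `x ↦ trace(g⁻¹ h g⁻¹ k)(x) = trace (H x ∘ K x) = Σᵢ h_x((k_x Eᵢ)^♯, Eᵢ)` is
`ν`-integrable and the canonical metric pairing `G_g(h,k) = ∫_M trace(g⁻¹hg⁻¹k) dν`
satisfies `-n
|h|⁰_g |k|⁰_g Vol(M,g) ≤ G_g(h,k) ≤ n |h|⁰_g |k|⁰_g Vol(M,g)`;
in particular the canonical Riemannian metric on the space of Riemannian metrics is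
defined on the space `Γ_g` of `g`-measurable tensor fields when `g` has finite
volume. -/
theorem canonical_metric_defined_on_finite_volume
    {n : ℕ} {M : Type*} [TopologicalSpace M]
    [ChartedSpace (EuclideanSpace ℝ (Fin n)) M] [IsManifold (𝓡 n) (⊤ : ℕ∞) M]
    [T2Space M] [MeasurableSpace M] [BorelSpace M]
    (ν : Measure M) [IsFiniteMeasure ν]
    (g h k : ∀ x : M, TangentSpace (𝓡 n) x →ₗ[ℝ] TangentSpace (𝓡 n) x →ₗ[ℝ] ℝ)
    -- `g` is a (continuous) Riemannian metric:
    (hg_symm : ∀ (x : M) (u v : TangentSpace (𝓡 n) x), g x u v = g x v u)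
    (hg_pos : ∀ (x : M) (v : TangentSpace (𝓡 n) x), v ≠ 0 → 0 < g x v v)
    (hg_cont : Continuous fun p : TotalSpace (EuclideanSpace ℝ (Fin n))
      (TangentSpace (𝓡 n) : M → Type _) => g p.proj p.2 p.2)
    -- `h, k` are continuous symmetric 2-covariant tensor fields:
    (hh_symm : ∀ (x : M) (u v : TangentSpace (𝓡 n) x), h x u v = h x v u)
    (hk_symm : ∀ (x : M) (u v : TangentSpace (𝓡 n) x), k x u v = k x v u)
    (hh_cont : Continuous fun p : TotalSpace (EuclideanSpace ℝ (Fin n))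
      (TangentSpace (𝓡 n) : M → Type _) => h p.proj p.2 p.2)
    (hk_cont : Continuous fun p : TotalSpace (EuclideanSpace ℝ (Fin n))
      (TangentSpace (𝓡 n) : M → Type _) => k p.proj p.2 p.2)
    -- `h, k` are `g`-measurable:
    (hh_meas : ∃ lam : ℝ, 0 ≤ lam ∧ ∀ (x : M) (v : TangentSpace (𝓡 n) x),
      -(lam * g x v v) ≤ h x v v ∧ h x v v ≤ lam * g x v v)
    (hk_meas : ∃ mu : ℝ, 0 ≤ mu ∧ ∀ (x : M) (v : TangentSpace (𝓡 n) x),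
      -(mu * g x v v) ≤ k x v v ∧ k x v v ≤ mu * g x v v)
    -- `H, K` are the `g`-self-adjoint endomorphism fields with
    -- `h u v = g (H u) v` and `k u v = g (K u) v` (i.e. `H = g⁻¹h`, `K = g⁻¹k`):
    (H K : ∀ x : M, TangentSpace (𝓡 n) x →ₗ[ℝ] TangentSpace (𝓡 n) x)
    (hH : ∀ (x : M) (u v : TangentSpace (𝓡 n) x), g x (H x u) v = h x u v)
    (hK : ∀ (x : M) (u v : TangentSpace (𝓡 n) x), g x (K x u) v = k x u v) :
    Integrable (fun x : M => LinearMap.trace ℝ (TangentSpace (𝓡 n) x) (H x ∘ₗ K x)) ν ∧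
    -((n : ℝ) * gMeasNorm g h * gMeasNorm g k * (ν univ).toReal) ≤
      ∫ x : M, LinearMap.trace ℝ (TangentSpace (𝓡 n) x) (H x ∘ₗ K x) ∂ν ∧
    ∫ x : M, LinearMap.trace ℝ (TangentSpace (𝓡 n) x) (H x ∘ₗ K x) ∂ν ≤
      (n : ℝ) * gMeasNorm g h * gMeasNorm g k * (ν univ).toReal := by
  classical
  obtain ⟨lam, hlam0, hlamb⟩ := hh_meas
  obtain ⟨mu, hmu0, hmub⟩ := hk_meas
  set f := fun x : M => LinearMap.trace ℝ (TangentSpace (𝓡 n) x) (H x ∘ₗ K x) with hf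
  have hcont : Continuous f :=
    cont_trace g h k hg_symm hg_pos hg_cont hh_symm hk_symm hh_cont hk_cont H K hH hK
  set Sh := {lam : ℝ | 0 ≤ lam ∧ ∀ (x : M) (v : TangentSpace (𝓡 n) x),
    -(lam * g x v v) ≤ h x v v ∧ h x v v ≤ lam * g x v v} with hShdef
  set Sk := {mu : ℝ | 0 ≤ mu ∧ ∀ (x : M) (v : TangentSpace (𝓡 n) x),
    -(mu * g x v v) ≤ k x v v ∧ k x v v ≤ mu * g x v v} with hSkdef
  have hgh : gMeasNorm g h = sInf Sh := rfl
  have hgk : gMeasNorm g k = sInf Sk := rfl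
  have hShne : Sh.Nonempty := ⟨lam, hlam0, hlamb⟩
  have hSkne : Sk.Nonempty := ⟨mu, hmu0, hmub⟩
  have h0h : 0 ≤ gMeasNorm g h := by
    rw [hgh]; exact Real.sInf_nonneg (fun l hl => hl.1)
  have hbd : ∀ (x : M), ∀ l ∈ Sh, ∀ m ∈ Sk, |f x| ≤ (n : ℝ) * l * m := by
    intro x l hl m hm
    haveI : FiniteDimensional ℝ (TangentSpace (𝓡 n) x) :=
      inferInstanceAs (FiniteDimensional ℝ (EuclideanSpace ℝ (Fin n)))
    exact @trace_bound_general (TangentSpace (𝓡 n) x) _ _ n this finrank_euclideanSpace_fin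
      (g x) (h x) (k x) (hg_symm x) (hg_pos x) (hh_symm x) (hk_symm x) _ _
      (fun v => hl.2 x v) (fun v => hm.2 x v) (H x) (K x) (hH x) (hK x)
  have hbd2 : ∀ x : M, |f x| ≤ (n : ℝ) * gMeasNorm g h * gMeasNorm g k := by
    intro x
    have step1 : ∀ m ∈ Sk, |f x| ≤ ((n : ℝ) * gMeasNorm g h) * m := by
      intro m hm
      have hm0 : 0 ≤ m := hm.1
      have h1 : |f x| ≤ ((n : ℝ) * m) * sInf Sh := by
        apply le_mul_csInf hShne (by positivity)
        intro l hl
        have := hbd x l hl m hm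
        calc |f x| ≤ (n : ℝ) * l * m := this
          _ = (n : ℝ) * m * l := by ring
      rw [← hgh] at h1
      calc |f x| ≤ ((n : ℝ) * m) * gMeasNorm g h := h1
        _ = ((n : ℝ) * gMeasNorm g h) * m := by ring
    have h2 : |f x| ≤ ((n : ℝ) * gMeasNorm g h) * sInf Sk :=
      le_mul_csInf hSkne (by positivity) step1
    rw [← hgk] at h2
    linarith [h2]
  have hintC : Integrable (fun _ : M => (n : ℝ) * gMeasNorm g h * gMeasNorm g k) ν :=
    integrable_const _
  have hint : Integrable f ν := by
    refine hintC.mono' hcont.aestronglyMeasurable ?_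
    exact Filter.Eventually.of_forall (fun x => by
      simpa [Real.norm_eq_abs] using hbd2 x)
  have habs : |∫ x : M, f x ∂ν| ≤ (n : ℝ) * gMeasNorm g h * gMeasNorm g k * (ν univ).toReal := by
    have h1 : |∫ x : M, f x ∂ν| ≤ ∫ x : M, |f x| ∂ν := by
      simpa [Real.norm_eq_abs] using norm_integral_le_integral_norm (μ := ν) f
    have h2 : ∫ x : M, |f x| ∂ν ≤ ∫ _x : M, (n : ℝ) * gMeasNorm g h * gMeasNorm g k ∂ν :=
      integral_mono hint.abs hintC (fun x => hbd2 x)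
    have h3 : ∫ _x : M, (n : ℝ) * gMeasNorm g h * gMeasNorm g k ∂ν
        = (n : ℝ) * gMeasNorm g h * gMeasNorm g k * (ν univ).toReal := by
      rw [integral_const, smul_eq_mul, mul_comm, measureReal_def]
    linarith
  have hx := abs_le.1 habs
  exact ⟨hint, by linarith [hx.1], by linarith [hx.2]⟩
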